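/- Let P ∈ ℤ[X] have nonnegative coefficients, nonzero constant term, and P(1) = 9. Then P factors uniquely into irreducibles in the monoid of polynomials with nonnegative integer coefficients, up to ordering of the factors. -/

import Mathlib

set_option maxHeartbeats 1000000

open Polynomial

def NNcoeff (P : Polynomial ℤ) : Prop := ∀ n, 0 ≤ P.coeff n

def IrredNN (P : Polynomial ℤ) : Prop :=
  NNcoeff P ∧ P ≠ 1 ∧
    ∀ S T : Polynomial ℤ, NNcoeff S → NNcoeff T → P = S * T → S = 1 ∨ T = 1

noncomputable def TP (m : Multiset ℕ) : Polynomial ℤ := (m.map (fun e => X ^ e)).sum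

lemma TP_zero : TP 0 = 0 := by simp [TP]

lemma TP_cons (a : ℕ) (m : Multiset ℕ) : TP (a ::ₘ m) = X ^ a + TP m := by
  simp [TP]

lemma coeff_TP (m : Multiset ℕ) (n : ℕ) : (TP m).coeff n = (m.count n : ℤ) := by
  induction m using Multiset.induction_on with
  | empty => simp [TP]
  | cons a s ih =>
      rw [TP_cons, coeff_add, ih, Polynomial.coeff_X_pow, Multiset.count_cons]
      by_cases hna : n = a <;> simp [hna] <;> ring

lemma TP_inj {m m' : Multiset ℕ} (h : TP m = TP m') : m = m' := by
  ext n
  have := congrArg (fun q => Polynomial.coeff q n) h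
  simp only [coeff_TP] at this
  exact_mod_cast this

lemma TP_nonneg (m : Multiset ℕ) (n : ℕ) : 0 ≤ (TP m).coeff n := by
  rw [coeff_TP]; positivity

lemma eval_TP (m : Multiset ℕ) : (TP m).eval 1 = (Multiset.card m : ℤ) := by
  induction m using Multiset.induction_on with
  | empty => simp [TP]
  | cons a s ih => rw [TP_cons]; simp [ih]; ring

lemma TP3_ne_zero (x y : ℕ) : TP {0, x, y} ≠ 0 := by
  intro h
  have := congrArg (fun q => Polynomial.eval 1 q) h
  simp only [eval_TP] at this
  simp at this

lemma TP3_eq (x y : ℕ) : TP {0, x, y} = 1 + X ^ x + X ^ y := by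
  simp [TP, Multiset.insert_eq_cons]
  ring

lemma expand9 (x y u v : ℕ) :
    TP {0, x, y} * TP {0, u, v}
      = TP {0, u, v, x, x + u, x + v, y, y + u, y + v} := by
  simp [TP, Multiset.insert_eq_cons, pow_add]
  ring

-- coefficients bounded by eval at 1
lemma coeff_le_eval_one {Q : Polynomial ℤ} (hQ : ∀ n, 0 ≤ Q.coeff n) (n : ℕ) :
    Q.coeff n ≤ Q.eval 1 := by
  rw [Polynomial.eval_eq_sum_range]
  simp only [one_pow, mul_one]
  by_cases hn : n < Q.natDegree + 1
  · exact Finset.single_le_sum (f := fun i => Q.coeff i) (fun i _ => hQ i) (Finset.mem_range.mpr hn)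
  · rw [Polynomial.coeff_eq_zero_of_natDegree_lt (by omega)]
    exact Finset.sum_nonneg fun i _ => hQ i

lemma eval_one_nonneg {Q : Polynomial ℤ} (hQ : ∀ n, 0 ≤ Q.coeff n) : 0 ≤ Q.eval 1 := by
  rw [Polynomial.eval_eq_sum_range]
  simp only [one_pow, mul_one]
  exact Finset.sum_nonneg fun i _ => hQ i

lemma exists_rep (k : ℕ) : ∀ Q : Polynomial ℤ, (∀ n, 0 ≤ Q.coeff n) → Q.eval 1 = (k : ℤ) →
    ∃ m : Multiset ℕ, Multiset.card m = k ∧ Q = TP m := by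
  induction k with
  | zero =>
      intro Q hQ hev
      refine ⟨0, by simp, ?_⟩
      rw [TP_zero]
      ext n
      have h1 := coeff_le_eval_one hQ n
      have h2 := hQ n
      simp only [Polynomial.coeff_zero]
      omega
  | succ k ih =>
      intro Q hQ hev
      have hQne : Q ≠ 0 := by
        intro h
        rw [h] at hev
        simp at hev
        omega
      set d := Q.natDegree with hd
      have hlead : 1 ≤ Q.coeff d := by
        have h1 := hQ d
        have h2 : Q.coeff d ≠ 0 := Polynomial.leadingCoeff_ne_zero.mpr hQne
        omega
      have hXd : ∀ n, (X ^ d : Polynomial ℤ).coeff n = if n = d then 1 else 0 := by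
        intro n; rw [Polynomial.coeff_X_pow]
      obtain ⟨m, hmcard, hmeq⟩ := ih (Q - X ^ d) (fun n => by
          have := hQ n
          rw [Polynomial.coeff_sub, hXd]
          by_cases hnd : n = d <;> simp [hnd] <;> omega)
        (by
          rw [Polynomial.eval_sub, hev]
          simp
          try push_cast
          try omega)
      refine ⟨d ::ₘ m, by simp [hmcard], ?_⟩
      rw [TP_cons, ← hmeq]
      ring

def ind (x y : ℕ) : ℕ := if x = y then 1 else 0

lemma ind_or (x y : ℕ) : (x = y ∧ ind x y = 1) ∨ (¬ x = y ∧ ind x y = 0) := by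
  by_cases h : x = y <;> simp [ind, h]

lemma count9 (p e1 e2 e3 e4 e5 e6 e7 e8 e9 : ℕ) :
    Multiset.count p ({e1,e2,e3,e4,e5,e6,e7,e8,e9} : Multiset ℕ)
      = ind p e1 + ind p e2 + ind p e3 + ind p e4 + ind p e5 + ind p e6 + ind p e7
        + ind p e8 + ind p e9 := by
  simp only [ind, Multiset.insert_eq_cons, Multiset.count_cons, Multiset.count_singleton]
  ring

lemma sum9 (e1 e2 e3 e4 e5 e6 e7 e8 e9 : ℕ) :
    ({e1,e2,e3,e4,e5,e6,e7,e8,e9} : Multiset ℕ).sum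
      = e1 + e2 + e3 + e4 + e5 + e6 + e7 + e8 + e9 := by
  simp only [Multiset.insert_eq_cons, Multiset.sum_cons, Multiset.sum_singleton]
  ring

lemma iors17 (p e1 e2 e3 e4 e5 e6 e7 e8 e9 e10 e11 e12 e13 e14 e15 e16 e17 : ℕ) :
    ((p = e1 ∧ ind p e1 = 1) ∨ (¬ p = e1 ∧ ind p e1 = 0)) ∧
    ((p = e2 ∧ ind p e2 = 1) ∨ (¬ p = e2 ∧ ind p e2 = 0)) ∧
    ((p = e3 ∧ ind p e3 = 1) ∨ (¬ p = e3 ∧ ind p e3 = 0)) ∧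
    ((p = e4 ∧ ind p e4 = 1) ∨ (¬ p = e4 ∧ ind p e4 = 0)) ∧
    ((p = e5 ∧ ind p e5 = 1) ∨ (¬ p = e5 ∧ ind p e5 = 0)) ∧
    ((p = e6 ∧ ind p e6 = 1) ∨ (¬ p = e6 ∧ ind p e6 = 0)) ∧
    ((p = e7 ∧ ind p e7 = 1) ∨ (¬ p = e7 ∧ ind p e7 = 0)) ∧
    ((p = e8 ∧ ind p e8 = 1) ∨ (¬ p = e8 ∧ ind p e8 = 0)) ∧
    ((p = e9 ∧ ind p e9 = 1) ∨ (¬ p = e9 ∧ ind p e9 = 0)) ∧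
    ((p = e10 ∧ ind p e10 = 1) ∨ (¬ p = e10 ∧ ind p e10 = 0)) ∧
    ((p = e11 ∧ ind p e11 = 1) ∨ (¬ p = e11 ∧ ind p e11 = 0)) ∧
    ((p = e12 ∧ ind p e12 = 1) ∨ (¬ p = e12 ∧ ind p e12 = 0)) ∧
    ((p = e13 ∧ ind p e13 = 1) ∨ (¬ p = e13 ∧ ind p e13 = 0)) ∧
    ((p = e14 ∧ ind p e14 = 1) ∨ (¬ p = e14 ∧ ind p e14 = 0)) ∧
    ((p = e15 ∧ ind p e15 = 1) ∨ (¬ p = e15 ∧ ind p e15 = 0)) ∧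
    ((p = e16 ∧ ind p e16 = 1) ∨ (¬ p = e16 ∧ ind p e16 = 0)) ∧
    ((p = e17 ∧ ind p e17 = 1) ∨ (¬ p = e17 ∧ ind p e17 = 0)) :=
  ⟨ind_or _ _, ind_or _ _, ind_or _ _, ind_or _ _, ind_or _ _, ind_or _ _, ind_or _ _, ind_or _ _, ind_or _ _, ind_or _ _, ind_or _ _, ind_or _ _, ind_or _ _, ind_or _ _, ind_or _ _, ind_or _ _, ind_or _ _⟩

lemma H0 (a₁ a₂ b₁ b₂ c₁ c₂ d₁ d₂ : ℕ) (ha : a₁ ≤ a₂) (hb : b₁ ≤ b₂) (hc : c₁ ≤ c₂) (hd : d₁ ≤ d₂)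
    (lab : a₁ < b₁ ∨ (a₁ = b₁ ∧ a₂ ≤ b₂)) (lcd : c₁ < d₁ ∨ (c₁ = d₁ ∧ c₂ ≤ d₂))
    (x1 : 1 ≤ a₁) (x2 : 1 ≤ c₁) (x3 : a₁ < c₁) 
    (h : ({0, b₁, b₂, a₁, a₁+b₁, a₁+b₂, a₂, a₂+b₁, a₂+b₂} : Multiset ℕ)
       = {0, d₁, d₂, c₁, c₁+d₁, c₁+d₂, c₂, c₂+d₁, c₂+d₂}) : False := by
  have K : ∀ p : ℕ, ind p 0 + ind p b₁ + ind p b₂ + ind p a₁ + ind p (a₁+b₁) + ind p (a₁+b₂)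
      + ind p a₂ + ind p (a₂+b₁) + ind p (a₂+b₂)
      = ind p 0 + ind p d₁ + ind p d₂ + ind p c₁ + ind p (c₁+d₁) + ind p (c₁+d₂)
      + ind p c₂ + ind p (c₂+d₁) + ind p (c₂+d₂) := fun p => by
    rw [← count9, ← count9, h]
  have S : (0:ℕ) + b₁ + b₂ + a₁ + (a₁+b₁) + (a₁+b₂) + a₂ + (a₂+b₁) + (a₂+b₂)
      = 0 + d₁ + d₂ + c₁ + (c₁+d₁) + (c₁+d₂) + c₂ + (c₂+d₁) + (c₂+d₂) := by
    have := congrArg Multiset.sum h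
    rwa [sum9, sum9] at this
  have KO := fun p => iors17 p 0 b₁ b₂ a₁ (a₁+b₁) (a₁+b₂) a₂ (a₂+b₁) (a₂+b₂)
      d₁ d₂ c₁ (c₁+d₁) (c₁+d₂) c₂ (c₂+d₁) (c₂+d₂)
  have k0 := K (a₁)
  have o0 := KO (a₁)
  omega

lemma H1 (a₁ a₂ b₁ b₂ c₁ c₂ d₁ d₂ : ℕ) (ha : a₁ ≤ a₂) (hb : b₁ ≤ b₂) (hc : c₁ ≤ c₂) (hd : d₁ ≤ d₂)
    (lab : a₁ < b₁ ∨ (a₁ = b₁ ∧ a₂ ≤ b₂)) (lcd : c₁ < d₁ ∨ (c₁ = d₁ ∧ c₂ ≤ d₂))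
    (x1 : 1 ≤ a₁) (x2 : 1 ≤ c₁) (x3 : a₁ = c₁) (x4 : a₂ ≤ b₁) (x5 : c₂ ≤ d₁) (x6 : a₂ < c₂) 
    (h : ({0, b₁, b₂, a₁, a₁+b₁, a₁+b₂, a₂, a₂+b₁, a₂+b₂} : Multiset ℕ)
       = {0, d₁, d₂, c₁, c₁+d₁, c₁+d₂, c₂, c₂+d₁, c₂+d₂}) : False := by
  have K : ∀ p : ℕ, ind p 0 + ind p b₁ + ind p b₂ + ind p a₁ + ind p (a₁+b₁) + ind p (a₁+b₂)
      + ind p a₂ + ind p (a₂+b₁) + ind p (a₂+b₂)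
      = ind p 0 + ind p d₁ + ind p d₂ + ind p c₁ + ind p (c₁+d₁) + ind p (c₁+d₂)
      + ind p c₂ + ind p (c₂+d₁) + ind p (c₂+d₂) := fun p => by
    rw [← count9, ← count9, h]
  have S : (0:ℕ) + b₁ + b₂ + a₁ + (a₁+b₁) + (a₁+b₂) + a₂ + (a₂+b₁) + (a₂+b₂)
      = 0 + d₁ + d₂ + c₁ + (c₁+d₁) + (c₁+d₂) + c₂ + (c₂+d₁) + (c₂+d₂) := by
    have := congrArg Multiset.sum h
    rwa [sum9, sum9] at this
  have KO := fun p => iors17 p 0 b₁ b₂ a₁ (a₁+b₁) (a₁+b₂) a₂ (a₂+b₁) (a₂+b₂)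
      d₁ d₂ c₁ (c₁+d₁) (c₁+d₂) c₂ (c₂+d₁) (c₂+d₂)
  have k0 := K (a₂)
  have o0 := KO (a₂)
  omega

lemma H2 (a₁ a₂ b₁ b₂ c₁ c₂ d₁ d₂ : ℕ) (ha : a₁ ≤ a₂) (hb : b₁ ≤ b₂) (hc : c₁ ≤ c₂) (hd : d₁ ≤ d₂)
    (lab : a₁ < b₁ ∨ (a₁ = b₁ ∧ a₂ ≤ b₂)) (lcd : c₁ < d₁ ∨ (c₁ = d₁ ∧ c₂ ≤ d₂))
    (x1 : 1 ≤ a₁) (x2 : 1 ≤ c₁) (x3 : a₁ = c₁) (x4 : a₂ ≤ b₁) (x5 : d₁ < c₂) 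
    (h : ({0, b₁, b₂, a₁, a₁+b₁, a₁+b₂, a₂, a₂+b₁, a₂+b₂} : Multiset ℕ)
       = {0, d₁, d₂, c₁, c₁+d₁, c₁+d₂, c₂, c₂+d₁, c₂+d₂}) : False := by
  have K : ∀ p : ℕ, ind p 0 + ind p b₁ + ind p b₂ + ind p a₁ + ind p (a₁+b₁) + ind p (a₁+b₂)
      + ind p a₂ + ind p (a₂+b₁) + ind p (a₂+b₂)
      = ind p 0 + ind p d₁ + ind p d₂ + ind p c₁ + ind p (c₁+d₁) + ind p (c₁+d₂)
      + ind p c₂ + ind p (c₂+d₁) + ind p (c₂+d₂) := fun p => by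
    rw [← count9, ← count9, h]
  have S : (0:ℕ) + b₁ + b₂ + a₁ + (a₁+b₁) + (a₁+b₂) + a₂ + (a₂+b₁) + (a₂+b₂)
      = 0 + d₁ + d₂ + c₁ + (c₁+d₁) + (c₁+d₂) + c₂ + (c₂+d₁) + (c₂+d₂) := by
    have := congrArg Multiset.sum h
    rwa [sum9, sum9] at this
  have KO := fun p => iors17 p 0 b₁ b₂ a₁ (a₁+b₁) (a₁+b₂) a₂ (a₂+b₁) (a₂+b₂)
      d₁ d₂ c₁ (c₁+d₁) (c₁+d₂) c₂ (c₂+d₁) (c₂+d₂)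
  have k0 := K (a₂)
  have o0 := KO (a₂)
  have k1 := K (c₂+d₂)
  have o1 := KO (c₂+d₂)
  omega

lemma H4a (a₁ a₂ b₁ b₂ c₁ c₂ d₁ d₂ : ℕ) (ha : a₁ ≤ a₂) (hb : b₁ ≤ b₂) (hc : c₁ ≤ c₂) (hd : d₁ ≤ d₂)
    (lab : a₁ < b₁ ∨ (a₁ = b₁ ∧ a₂ ≤ b₂)) (lcd : c₁ < d₁ ∨ (c₁ = d₁ ∧ c₂ ≤ d₂))
    (x1 : 1 ≤ a₁) (x2 : 1 ≤ c₁) (x3 : a₁ = c₁) (x4 : b₁ < a₂) (x5 : d₁ < c₂) (x6 : b₁ < d₁) 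
    (h : ({0, b₁, b₂, a₁, a₁+b₁, a₁+b₂, a₂, a₂+b₁, a₂+b₂} : Multiset ℕ)
       = {0, d₁, d₂, c₁, c₁+d₁, c₁+d₂, c₂, c₂+d₁, c₂+d₂}) : False := by
  have K : ∀ p : ℕ, ind p 0 + ind p b₁ + ind p b₂ + ind p a₁ + ind p (a₁+b₁) + ind p (a₁+b₂)
      + ind p a₂ + ind p (a₂+b₁) + ind p (a₂+b₂)
      = ind p 0 + ind p d₁ + ind p d₂ + ind p c₁ + ind p (c₁+d₁) + ind p (c₁+d₂)
      + ind p c₂ + ind p (c₂+d₁) + ind p (c₂+d₂) := fun p => by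
    rw [← count9, ← count9, h]
  have S : (0:ℕ) + b₁ + b₂ + a₁ + (a₁+b₁) + (a₁+b₂) + a₂ + (a₂+b₁) + (a₂+b₂)
      = 0 + d₁ + d₂ + c₁ + (c₁+d₁) + (c₁+d₂) + c₂ + (c₂+d₁) + (c₂+d₂) := by
    have := congrArg Multiset.sum h
    rwa [sum9, sum9] at this
  have KO := fun p => iors17 p 0 b₁ b₂ a₁ (a₁+b₁) (a₁+b₂) a₂ (a₂+b₁) (a₂+b₂)
      d₁ d₂ c₁ (c₁+d₁) (c₁+d₂) c₂ (c₂+d₁) (c₂+d₂)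
  have k0 := K (b₁)
  have o0 := KO (b₁)
  omega

lemma H4b (a₁ a₂ b₁ b₂ c₁ c₂ d₁ d₂ : ℕ) (ha : a₁ ≤ a₂) (hb : b₁ ≤ b₂) (hc : c₁ ≤ c₂) (hd : d₁ ≤ d₂)
    (lab : a₁ < b₁ ∨ (a₁ = b₁ ∧ a₂ ≤ b₂)) (lcd : c₁ < d₁ ∨ (c₁ = d₁ ∧ c₂ ≤ d₂))
    (x1 : 1 ≤ a₁) (x2 : 1 ≤ c₁) (x3 : a₁ = c₁) (x4 : b₁ < a₂) (x5 : d₁ < c₂) (x6 : b₁ = d₁) (x7 : b₂ < d₂) 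
    (h : ({0, b₁, b₂, a₁, a₁+b₁, a₁+b₂, a₂, a₂+b₁, a₂+b₂} : Multiset ℕ)
       = {0, d₁, d₂, c₁, c₁+d₁, c₁+d₂, c₂, c₂+d₁, c₂+d₂}) : False := by
  have K : ∀ p : ℕ, ind p 0 + ind p b₁ + ind p b₂ + ind p a₁ + ind p (a₁+b₁) + ind p (a₁+b₂)
      + ind p a₂ + ind p (a₂+b₁) + ind p (a₂+b₂)
      = ind p 0 + ind p d₁ + ind p d₂ + ind p c₁ + ind p (c₁+d₁) + ind p (c₁+d₂)
      + ind p c₂ + ind p (c₂+d₁) + ind p (c₂+d₂) := fun p => by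
    rw [← count9, ← count9, h]
  have S : (0:ℕ) + b₁ + b₂ + a₁ + (a₁+b₁) + (a₁+b₂) + a₂ + (a₂+b₁) + (a₂+b₂)
      = 0 + d₁ + d₂ + c₁ + (c₁+d₁) + (c₁+d₂) + c₂ + (c₂+d₁) + (c₂+d₂) := by
    have := congrArg Multiset.sum h
    rwa [sum9, sum9] at this
  have KO := fun p => iors17 p 0 b₁ b₂ a₁ (a₁+b₁) (a₁+b₂) a₂ (a₂+b₁) (a₂+b₂)
      d₁ d₂ c₁ (c₁+d₁) (c₁+d₂) c₂ (c₂+d₁) (c₂+d₂)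
  have k0 := K (a₂)
  have o0 := KO (a₂)
  have k1 := K (a₂+b₁)
  have o1 := KO (a₂+b₁)
  omega

lemma Ht1 (a₁ a₂ b₁ b₂ c₁ c₂ d₁ d₂ : ℕ) (ha : a₁ ≤ a₂) (hb : b₁ ≤ b₂) (hc : c₁ ≤ c₂) (hd : d₁ ≤ d₂)
    (lab : a₁ < b₁ ∨ (a₁ = b₁ ∧ a₂ ≤ b₂)) (lcd : c₁ < d₁ ∨ (c₁ = d₁ ∧ c₂ ≤ d₂))
    (x1 : a₂ = 0) (x2 : 1 ≤ b₂) (x3 : 1 ≤ c₂) 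
    (h : ({0, b₁, b₂, a₁, a₁+b₁, a₁+b₂, a₂, a₂+b₁, a₂+b₂} : Multiset ℕ)
       = {0, d₁, d₂, c₁, c₁+d₁, c₁+d₂, c₂, c₂+d₁, c₂+d₂}) : False := by
  have K : ∀ p : ℕ, ind p 0 + ind p b₁ + ind p b₂ + ind p a₁ + ind p (a₁+b₁) + ind p (a₁+b₂)
      + ind p a₂ + ind p (a₂+b₁) + ind p (a₂+b₂)
      = ind p 0 + ind p d₁ + ind p d₂ + ind p c₁ + ind p (c₁+d₁) + ind p (c₁+d₂)
      + ind p c₂ + ind p (c₂+d₁) + ind p (c₂+d₂) := fun p => by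
    rw [← count9, ← count9, h]
  have S : (0:ℕ) + b₁ + b₂ + a₁ + (a₁+b₁) + (a₁+b₂) + a₂ + (a₂+b₁) + (a₂+b₂)
      = 0 + d₁ + d₂ + c₁ + (c₁+d₁) + (c₁+d₂) + c₂ + (c₂+d₁) + (c₂+d₂) := by
    have := congrArg Multiset.sum h
    rwa [sum9, sum9] at this
  have KO := fun p => iors17 p 0 b₁ b₂ a₁ (a₁+b₁) (a₁+b₂) a₂ (a₂+b₁) (a₂+b₂)
      d₁ d₂ c₁ (c₁+d₁) (c₁+d₂) c₂ (c₂+d₁) (c₂+d₂)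
  have k0 := K (0)
  have o0 := KO (0)
  omega

lemma Ht2a (a₁ a₂ b₁ b₂ c₁ c₂ d₁ d₂ : ℕ) (ha : a₁ ≤ a₂) (hb : b₁ ≤ b₂) (hc : c₁ ≤ c₂) (hd : d₁ ≤ d₂)
    (lab : a₁ < b₁ ∨ (a₁ = b₁ ∧ a₂ ≤ b₂)) (lcd : c₁ < d₁ ∨ (c₁ = d₁ ∧ c₂ ≤ d₂))
    (x1 : a₁ = 0) (x2 : b₁ = 0) (x3 : c₁ = 0) (x4 : d₁ = 0) (x5 : 1 ≤ a₂) (x6 : 1 ≤ b₂) (x7 : 1 ≤ c₂) (x8 : 1 ≤ d₂) (x9 : a₂ < c₂) 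
    (h : ({0, b₁, b₂, a₁, a₁+b₁, a₁+b₂, a₂, a₂+b₁, a₂+b₂} : Multiset ℕ)
       = {0, d₁, d₂, c₁, c₁+d₁, c₁+d₂, c₂, c₂+d₁, c₂+d₂}) : False := by
  have K : ∀ p : ℕ, ind p 0 + ind p b₁ + ind p b₂ + ind p a₁ + ind p (a₁+b₁) + ind p (a₁+b₂)
      + ind p a₂ + ind p (a₂+b₁) + ind p (a₂+b₂)
      = ind p 0 + ind p d₁ + ind p d₂ + ind p c₁ + ind p (c₁+d₁) + ind p (c₁+d₂)
      + ind p c₂ + ind p (c₂+d₁) + ind p (c₂+d₂) := fun p => by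
    rw [← count9, ← count9, h]
  have S : (0:ℕ) + b₁ + b₂ + a₁ + (a₁+b₁) + (a₁+b₂) + a₂ + (a₂+b₁) + (a₂+b₂)
      = 0 + d₁ + d₂ + c₁ + (c₁+d₁) + (c₁+d₂) + c₂ + (c₂+d₁) + (c₂+d₂) := by
    have := congrArg Multiset.sum h
    rwa [sum9, sum9] at this
  have KO := fun p => iors17 p 0 b₁ b₂ a₁ (a₁+b₁) (a₁+b₂) a₂ (a₂+b₁) (a₂+b₂)
      d₁ d₂ c₁ (c₁+d₁) (c₁+d₂) c₂ (c₂+d₁) (c₂+d₂)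
  have k0 := K (a₂)
  have o0 := KO (a₂)
  omega

lemma Ht2b (a₁ a₂ b₁ b₂ c₁ c₂ d₁ d₂ : ℕ) (ha : a₁ ≤ a₂) (hb : b₁ ≤ b₂) (hc : c₁ ≤ c₂) (hd : d₁ ≤ d₂)
    (lab : a₁ < b₁ ∨ (a₁ = b₁ ∧ a₂ ≤ b₂)) (lcd : c₁ < d₁ ∨ (c₁ = d₁ ∧ c₂ ≤ d₂))
    (x1 : a₁ = 0) (x2 : c₁ = 0) (x3 : 1 ≤ b₁) (x4 : 1 ≤ d₁) (x5 : 1 ≤ a₂) (x6 : 1 ≤ c₂) (x7 : a₂ < c₂) 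
    (h : ({0, b₁, b₂, a₁, a₁+b₁, a₁+b₂, a₂, a₂+b₁, a₂+b₂} : Multiset ℕ)
       = {0, d₁, d₂, c₁, c₁+d₁, c₁+d₂, c₂, c₂+d₁, c₂+d₂}) : False := by
  have K : ∀ p : ℕ, ind p 0 + ind p b₁ + ind p b₂ + ind p a₁ + ind p (a₁+b₁) + ind p (a₁+b₂)
      + ind p a₂ + ind p (a₂+b₁) + ind p (a₂+b₂)
      = ind p 0 + ind p d₁ + ind p d₂ + ind p c₁ + ind p (c₁+d₁) + ind p (c₁+d₂)
      + ind p c₂ + ind p (c₂+d₁) + ind p (c₂+d₂) := fun p => by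
    rw [← count9, ← count9, h]
  have S : (0:ℕ) + b₁ + b₂ + a₁ + (a₁+b₁) + (a₁+b₂) + a₂ + (a₂+b₁) + (a₂+b₂)
      = 0 + d₁ + d₂ + c₁ + (c₁+d₁) + (c₁+d₂) + c₂ + (c₂+d₁) + (c₂+d₂) := by
    have := congrArg Multiset.sum h
    rwa [sum9, sum9] at this
  have KO := fun p => iors17 p 0 b₁ b₂ a₁ (a₁+b₁) (a₁+b₂) a₂ (a₂+b₁) (a₂+b₂)
      d₁ d₂ c₁ (c₁+d₁) (c₁+d₂) c₂ (c₂+d₁) (c₂+d₂)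
  have k0 := K (a₂)
  have o0 := KO (a₂)
  omega

lemma pair_eq (x y u v : ℕ) (hx : x ≤ y) (hu : u ≤ v)
    (h : ({0,x,y} : Multiset ℕ) = {0,u,v}) : x = u ∧ y = v := by
  have m1 : x ∈ ({0,u,v} : Multiset ℕ) := h ▸ (by simp)
  have m2 : y ∈ ({0,u,v} : Multiset ℕ) := h ▸ (by simp)
  have m3 : u ∈ ({0,x,y} : Multiset ℕ) := h.symm ▸ (by simp)
  have m4 : v ∈ ({0,x,y} : Multiset ℕ) := h.symm ▸ (by simp)
  have hs : x + y = u + v := by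
    have := congrArg Multiset.sum h
    simp only [Multiset.insert_eq_cons, Multiset.sum_cons, Multiset.sum_singleton] at this
    omega
  simp only [Multiset.insert_eq_cons, Multiset.mem_cons, Multiset.mem_singleton] at m1 m2 m3 m4
  omega

lemma core_aux (a₁ a₂ b₁ b₂ c₁ c₂ d₁ d₂ : ℕ) (ha : a₁ ≤ a₂) (hb : b₁ ≤ b₂) (hc : c₁ ≤ c₂) (hd : d₁ ≤ d₂)
    (lab : a₁ < b₁ ∨ (a₁ = b₁ ∧ a₂ ≤ b₂)) (lcd : c₁ < d₁ ∨ (c₁ = d₁ ∧ c₂ ≤ d₂))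
    (hP : TP {0,a₁,a₂} * TP {0,b₁,b₂} = TP {0,c₁,c₂} * TP {0,d₁,d₂}) :
    (a₁ = c₁ ∧ a₂ = c₂ ∧ b₁ = d₁ ∧ b₂ = d₂) ∨ (a₁ = d₁ ∧ a₂ = d₂ ∧ b₁ = c₁ ∧ b₂ = c₂) := by
  have h : ({0, b₁, b₂, a₁, a₁+b₁, a₁+b₂, a₂, a₂+b₁, a₂+b₂} : Multiset ℕ)
      = {0, d₁, d₂, c₁, c₁+d₁, c₁+d₂, c₂, c₂+d₁, c₂+d₂} := by
    apply TP_inj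
    rw [← expand9, ← expand9]
    exact hP
  have K : ∀ p : ℕ, ind p 0 + ind p b₁ + ind p b₂ + ind p a₁ + ind p (a₁+b₁) + ind p (a₁+b₂)
      + ind p a₂ + ind p (a₂+b₁) + ind p (a₂+b₂)
      = ind p 0 + ind p d₁ + ind p d₂ + ind p c₁ + ind p (c₁+d₁) + ind p (c₁+d₂)
      + ind p c₂ + ind p (c₂+d₁) + ind p (c₂+d₂) := fun p => by
    rw [← count9, ← count9, h]
  have KO := fun p => iors17 p 0 b₁ b₂ a₁ (a₁+b₁) (a₁+b₂) a₂ (a₂+b₁) (a₂+b₂)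
      d₁ d₂ c₁ (c₁+d₁) (c₁+d₂) c₂ (c₂+d₁) (c₂+d₂)
  have S : (0:ℕ) + b₁ + b₂ + a₁ + (a₁+b₁) + (a₁+b₂) + a₂ + (a₂+b₁) + (a₂+b₂)
      = 0 + d₁ + d₂ + c₁ + (c₁+d₁) + (c₁+d₂) + c₂ + (c₂+d₁) + (c₂+d₂) := by
    have := congrArg Multiset.sum h
    rwa [sum9, sum9] at this

  by_cases hb2 : b₂ = 0
  · have hz : a₁ = 0 ∧ a₂ = 0 ∧ b₁ = 0 := by omega
    have hr : c₁ = 0 ∧ c₂ = 0 ∧ d₁ = 0 ∧ d₂ = 0 := by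
      have := K 0; have := KO 0; omega
    left; exact ⟨by omega, by omega, by omega, by omega⟩
  by_cases ha2 : a₂ = 0
  · have hc2 : c₂ = 0 := by
      by_contra hcc
      exact Ht1 a₁ a₂ b₁ b₂ c₁ c₂ d₁ d₂ ha hb hc hd lab lcd ha2 (by omega) (by omega) h
    have hAC : TP {0,a₁,a₂} = TP {0,c₁,c₂} := by
      have e1 : a₁ = 0 := by omega
      have e2 : c₁ = 0 := by omega
      rw [e1, e2, ha2, hc2]
    rw [hAC] at hP
    have hp := pair_eq b₁ b₂ d₁ d₂ hb hd (TP_inj (mul_left_cancel₀ (TP3_ne_zero c₁ c₂) hP))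
    left; exact ⟨by omega, by omega, hp.1, hp.2⟩
  by_cases ha1 : a₁ = 0
  · by_cases hb1 : b₁ = 0
    · have hy : 1 ≤ a₂ ∧ 1 ≤ b₂ := by omega
      have hsync : c₁ = 0 ∧ d₁ = 0 ∧ 1 ≤ c₂ ∧ 1 ≤ d₂ := by
        have := K 0; have := KO 0; omega
      have hac : a₂ = c₂ := by
        rcases lt_trichotomy a₂ c₂ with hl | he | hl
        · exact (Ht2a a₁ a₂ b₁ b₂ c₁ c₂ d₁ d₂ ha hb hc hd lab lcd ha1 hb1 hsync.1 hsync.2.1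
            hy.1 hy.2 hsync.2.2.1 hsync.2.2.2 hl h).elim
        · exact he
        · exact (Ht2a c₁ c₂ d₁ d₂ a₁ a₂ b₁ b₂ hc hd ha hb lcd lab hsync.1 hsync.2.1 ha1 hb1
            hsync.2.2.1 hsync.2.2.2 hy.1 hy.2 hl h.symm).elim
      left; refine ⟨by omega, hac, by omega, by omega⟩
    · have hy : 1 ≤ a₂ ∧ 1 ≤ b₁ := by omega
      have hsync : c₁ = 0 ∧ 1 ≤ c₂ ∧ 1 ≤ d₁ := by
        have := K 0; have := KO 0; omega
      have hac : a₂ = c₂ := by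
        rcases lt_trichotomy a₂ c₂ with hl | he | hl
        · exact (Ht2b a₁ a₂ b₁ b₂ c₁ c₂ d₁ d₂ ha hb hc hd lab lcd ha1 hsync.1 hy.2 hsync.2.2
            hy.1 hsync.2.1 hl h).elim
        · exact he
        · exact (Ht2b c₁ c₂ d₁ d₂ a₁ a₂ b₁ b₂ hc hd ha hb lcd lab hsync.1 ha1 hsync.2.2 hy.2
            hsync.2.1 hy.1 hl h.symm).elim
      have hAC : TP {0,a₁,a₂} = TP {0,c₁,c₂} := by rw [ha1, hsync.1, hac]
      rw [hAC] at hP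
      have hp := pair_eq b₁ b₂ d₁ d₂ hb hd (TP_inj (mul_left_cancel₀ (TP3_ne_zero c₁ c₂) hP))
      left; exact ⟨by omega, hac, hp.1, hp.2⟩
  · have hx1 : 1 ≤ a₁ := by omega
    have hc1' : 1 ≤ c₁ := by
      have := K 0; have := KO 0; omega
    have hac1 : a₁ = c₁ := by
      rcases lt_trichotomy a₁ c₁ with hl | he | hl
      · exact (H0 a₁ a₂ b₁ b₂ c₁ c₂ d₁ d₂ ha hb hc hd lab lcd hx1 hc1' hl h).elim
      · exact he
      · exact (H0 c₁ c₂ d₁ d₂ a₁ a₂ b₁ b₂ hc hd ha hb lcd lab hc1' hx1 hl h.symm).elim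
    rcases le_or_gt a₂ b₁ with hab | hab <;> rcases le_or_gt c₂ d₁ with hcd | hcd
    · have hac2 : a₂ = c₂ := by
        rcases lt_trichotomy a₂ c₂ with hl | he | hl
        · exact (H1 a₁ a₂ b₁ b₂ c₁ c₂ d₁ d₂ ha hb hc hd lab lcd hx1 hc1' hac1 hab hcd hl h).elim
        · exact he
        · exact (H1 c₁ c₂ d₁ d₂ a₁ a₂ b₁ b₂ hc hd ha hb lcd lab hc1' hx1 hac1.symm hcd hab hl h.symm).elim
      have hAC : TP {0,a₁,a₂} = TP {0,c₁,c₂} := by rw [hac1, hac2]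
      rw [hAC] at hP
      have hp := pair_eq b₁ b₂ d₁ d₂ hb hd (TP_inj (mul_left_cancel₀ (TP3_ne_zero c₁ c₂) hP))
      left; exact ⟨hac1, hac2, hp.1, hp.2⟩
    · exact (H2 a₁ a₂ b₁ b₂ c₁ c₂ d₁ d₂ ha hb hc hd lab lcd hx1 hc1' hac1 hab hcd h).elim
    · exact (H2 c₁ c₂ d₁ d₂ a₁ a₂ b₁ b₂ hc hd ha hb lcd lab hc1' hx1 hac1.symm hcd hab h.symm).elim
    · have hbd1 : b₁ = d₁ := by
        rcases lt_trichotomy b₁ d₁ with hl | he | hl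
        · exact (H4a a₁ a₂ b₁ b₂ c₁ c₂ d₁ d₂ ha hb hc hd lab lcd hx1 hc1' hac1 hab hcd hl h).elim
        · exact he
        · exact (H4a c₁ c₂ d₁ d₂ a₁ a₂ b₁ b₂ hc hd ha hb lcd lab hc1' hx1 hac1.symm hcd hab hl h.symm).elim
      have hbd2 : b₂ = d₂ := by
        rcases lt_trichotomy b₂ d₂ with hl | he | hl
        · exact (H4b a₁ a₂ b₁ b₂ c₁ c₂ d₁ d₂ ha hb hc hd lab lcd hx1 hc1' hac1 hab hcd hbd1 hl h).elim
        · exact he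
        · exact (H4b c₁ c₂ d₁ d₂ a₁ a₂ b₁ b₂ hc hd ha hb lcd lab hc1' hx1 hac1.symm hcd hab hbd1.symm hl h.symm).elim
      have hBD : TP {0,b₁,b₂} = TP {0,d₁,d₂} := by rw [hbd1, hbd2]
      rw [hBD] at hP
      have hp := pair_eq a₁ a₂ c₁ c₂ ha hc (TP_inj (mul_right_cancel₀ (TP3_ne_zero d₁ d₂) hP))
      left; exact ⟨hp.1, hp.2, hbd1, hbd2⟩

lemma core_poly (a₁ a₂ b₁ b₂ c₁ c₂ d₁ d₂ : ℕ)
    (ha : a₁ ≤ a₂) (hb : b₁ ≤ b₂) (hc : c₁ ≤ c₂) (hd : d₁ ≤ d₂)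
    (hP : TP {0,a₁,a₂} * TP {0,b₁,b₂} = TP {0,c₁,c₂} * TP {0,d₁,d₂}) :
    (a₁ = c₁ ∧ a₂ = c₂ ∧ b₁ = d₁ ∧ b₂ = d₂) ∨ (a₁ = d₁ ∧ a₂ = d₂ ∧ b₁ = c₁ ∧ b₂ = c₂) := by
  have lab : (a₁ < b₁ ∨ (a₁ = b₁ ∧ a₂ ≤ b₂)) ∨ (b₁ < a₁ ∨ (b₁ = a₁ ∧ b₂ ≤ a₂)) := by omega
  have lcd : (c₁ < d₁ ∨ (c₁ = d₁ ∧ c₂ ≤ d₂)) ∨ (d₁ < c₁ ∨ (d₁ = c₁ ∧ d₂ ≤ c₂)) := by omega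
  rcases lab with lab | lab <;> rcases lcd with lcd | lcd
  · have := core_aux a₁ a₂ b₁ b₂ c₁ c₂ d₁ d₂ ha hb hc hd lab lcd hP
    omega
  · have := core_aux a₁ a₂ b₁ b₂ d₁ d₂ c₁ c₂ ha hb hd hc lab lcd
      (hP.trans (mul_comm _ _))
    omega
  · have := core_aux b₁ b₂ a₁ a₂ c₁ c₂ d₁ d₂ hb ha hc hd lab lcd
      ((mul_comm _ _).trans hP)
    omega
  · have := core_aux b₁ b₂ a₁ a₂ d₁ d₂ c₁ c₂ hb ha hd hc lab lcd
      (((mul_comm _ _).trans hP).trans (mul_comm _ _))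
    omega

lemma TP_singleton (e : ℕ) : TP {e} = X ^ e := by simp [TP]

lemma TP_one : TP {0} = 1 := by simp [TP_singleton]

lemma rep3 (Q : Polynomial ℤ) (hQ : ∀ n, 0 ≤ Q.coeff n) (h0 : Q.coeff 0 ≠ 0)
    (h3 : Q.eval 1 = 3) : ∃ x y : ℕ, x ≤ y ∧ Q = TP {0, x, y} := by
  obtain ⟨m, hcard, hrep⟩ := exists_rep 3 Q hQ (by exact_mod_cast h3)
  have h0m : (0 : ℕ) ∈ m := by
    by_contra hmem
    rw [hrep, coeff_TP, Multiset.count_eq_zero.mpr hmem] at h0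
    simp at h0
  obtain ⟨m', hm'⟩ := Multiset.exists_cons_of_mem h0m
  have hcard' : Multiset.card m' = 2 := by
    rw [hm'] at hcard; simp at hcard; omega
  obtain ⟨x, y, hxy⟩ := Multiset.card_eq_two.mp hcard'
  rcases le_total x y with hle | hle
  · refine ⟨x, y, hle, ?_⟩
    rw [hrep, hm', hxy]
    rfl
  · refine ⟨y, x, hle, ?_⟩
    rw [hrep, hm', hxy]
    congr 1
    refine (congrArg (0 ::ₘ ·) ?_ : _)
    exact Multiset.cons_swap x y 0

lemma two_le_val (Q : Polynomial ℤ) (hQ : ∀ n, 0 ≤ Q.coeff n) (h0 : Q.coeff 0 ≠ 0)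
    (h1 : Q ≠ 1) : 2 ≤ Q.eval 1 := by
  have hnn : 0 ≤ Q.eval 1 := eval_one_nonneg hQ
  by_contra hlt
  push_neg at hlt
  interval_cases hv : Q.eval 1
  · obtain ⟨m, hcard, hrep⟩ := exists_rep 0 Q hQ (by exact_mod_cast hv)
    rw [Multiset.card_eq_zero.mp hcard] at hrep
    rw [hrep, coeff_TP] at h0
    simp at h0
  · obtain ⟨m, hcard, hrep⟩ := exists_rep 1 Q hQ (by exact_mod_cast hv)
    obtain ⟨e, he⟩ := Multiset.card_eq_one.mp hcard
    rw [he] at hrep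
    have he0 : e = 0 := by
      by_contra hne
      rw [hrep, coeff_TP] at h0
      simp [Multiset.count_singleton, Ne.symm hne] at h0
    rw [he0, TP_one] at hrep
    exact h1 hrep

lemma one_le_int_prod (L : List ℤ) (h : ∀ x ∈ L, 1 ≤ x) : 1 ≤ L.prod := by
  induction L with
  | nil => simp
  | cons a t ih =>
      rw [List.prod_cons]
      have ha := h a (by simp)
      have ht := ih (fun x hx => h x (by simp [hx]))
      nlinarith

lemma val39 (v : ℤ) (h2 : 2 ≤ v) (hdvd : v ∣ 9) : v = 3 ∨ v = 9 := by
  have h9 : v ≤ 9 := Int.le_of_dvd (by norm_num) hdvd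
  interval_cases v <;> first
    | (left; rfl)
    | (right; rfl)
    | (exfalso; norm_num at hdvd)

lemma classify (P : Polynomial ℤ) (hc : P.coeff 0 ≠ 0) (hsum : P.eval 1 = 9)
    (l : List (Polynomial ℤ)) (hI : ∀ Q ∈ l, IrredNN Q) (hpl : l.prod = P) :
    l = [P] ∨ (∃ x y u v : ℕ, x ≤ y ∧ u ≤ v ∧ l = [TP {0,x,y}, TP {0,u,v}]) := by
  -- constant coefficients multiply
  have hc0 : ∀ Q ∈ l, Q.coeff 0 ≠ 0 := by
    intro Q hQ hQ0
    apply hc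
    have h1 : (constantCoeff : Polynomial ℤ →+* ℤ) l.prod = (l.map constantCoeff).prod :=
      map_list_prod _ _
    have h2 : (constantCoeff Q : ℤ) ∣ (l.map constantCoeff).prod :=
      List.dvd_prod (List.mem_map_of_mem hQ)
    rw [← h1, hpl] at h2
    rw [Polynomial.constantCoeff_apply, hQ0] at h2
    exact zero_dvd_iff.mp h2
  have hev : (l.map (fun Q => Q.eval 1)).prod = 9 := by
    have h1 : (evalRingHom (1:ℤ) : Polynomial ℤ →+* ℤ) l.prod = (l.map (evalRingHom 1)).prod :=
      map_list_prod _ _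
    rw [hpl] at h1
    simpa [hsum] using h1.symm
  have hv3 : ∀ Q ∈ l, Q.eval 1 = 3 ∨ Q.eval 1 = 9 := by
    intro Q hQ
    have h2 : 2 ≤ Q.eval 1 := two_le_val Q (hI Q hQ).1 (hc0 Q hQ) (hI Q hQ).2.1
    have hdvd : Q.eval 1 ∣ 9 := by
      rw [← hev]
      exact List.dvd_prod (by
        have : Q.eval 1 ∈ l.map (fun Q => Q.eval 1) := List.mem_map_of_mem hQ
        exact this)
    exact val39 _ h2 hdvd
  match l, hI, hpl, hc0, hev, hv3 with
  | [], _, hpl, hc0, hev, hv3 => 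
      exfalso
      simp at hpl
      rw [← hpl] at hsum
      simp at hsum
  | [Q], _, hpl, hc0, hev, hv3 =>
      left
      simp at hpl
      rw [hpl]
  | [Q, R], hI, hpl, hc0, hev, hv3 =>
      right
      have hQv := hv3 Q (by simp)
      have hRv := hv3 R (by simp)
      have hprod : Q.eval 1 * R.eval 1 = 9 := by
        simpa using hev
      have hQ3 : Q.eval 1 = 3 ∧ R.eval 1 = 3 := by
        rcases hQv with h | h <;> rcases hRv with h' | h' <;>
          rw [h, h'] at hprod <;> norm_num at hprod <;> exact ⟨h, h'⟩
      obtain ⟨x, y, hxy, hQr⟩ := rep3 Q (hI Q (by simp)).1 (hc0 Q (by simp)) hQ3.1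
      obtain ⟨u, v, huv, hRr⟩ := rep3 R (hI R (by simp)).1 (hc0 R (by simp)) hQ3.2
      exact ⟨x, y, u, v, hxy, huv, by rw [hQr, hRr]⟩
  | Q :: R :: S :: t, hI, hpl, hc0, hev, hv3 =>
      exfalso
      have h3Q : (3:ℤ) ∣ Q.eval 1 := by rcases hv3 Q (by simp) with h | h <;> rw [h] <;> norm_num
      have h3R : (3:ℤ) ∣ R.eval 1 := by rcases hv3 R (by simp) with h | h <;> rw [h] <;> norm_num
      have h3S : (3:ℤ) ∣ S.eval 1 := by rcases hv3 S (by simp) with h | h <;> rw [h] <;> norm_num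
      have h27 : (27:ℤ) ∣ 9 := by
        rw [← hev]
        simp only [List.map_cons, List.prod_cons]
        have : (27:ℤ) = 3 * (3 * 3) := by norm_num
        rw [this]
        exact mul_dvd_mul h3Q (mul_dvd_mul h3R (Dvd.dvd.mul_right h3S _))
      norm_num at h27

theorem stmt19 (P : Polynomial ℤ) (hP : ∀ n, 0 ≤ P.coeff n)
    (hc : P.coeff 0 ≠ 0) (hsum : P.eval 1 = 9) :
    ∀ l l' : List (Polynomial ℤ),
      (∀ Q ∈ l, IrredNN Q) → (∀ Q ∈ l', IrredNN Q) →
      l.prod = P → l'.prod = P → l.Perm l' := by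
  intro l l' hIl hIl' hpl hpl'
  rcases classify P hc hsum l hIl hpl with hl | ⟨x, y, u, v, hxy, huv, hl⟩ <;>
    rcases classify P hc hsum l' hIl' hpl' with hl' | ⟨x', y', u', v', hxy', huv', hl'⟩
  · rw [hl, hl']
  · -- l = [P], l' = [C, D] : P = C*D contradicts irreducibility
    exfalso
    have hirr : IrredNN P := by
      apply hIl; rw [hl]; simp
    have hPe : P = TP {0,x',y'} * TP {0,u',v'} := by
      rw [← hpl', hl']; simp [List.prod_cons]
    rcases hirr.2.2 _ _ (fun n => TP_nonneg _ n) (fun n => TP_nonneg _ n) hPe with h1 | h1 <;>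
    · have := congrArg (fun q => Polynomial.eval 1 q) h1
      simp only [eval_TP] at this
      simp at this
  · exfalso
    have hirr : IrredNN P := by
      apply hIl'; rw [hl']; simp
    have hPe : P = TP {0,x,y} * TP {0,u,v} := by
      rw [← hpl, hl]; simp [List.prod_cons]
    rcases hirr.2.2 _ _ (fun n => TP_nonneg _ n) (fun n => TP_nonneg _ n) hPe with h1 | h1 <;>
    · have := congrArg (fun q => Polynomial.eval 1 q) h1
      simp only [eval_TP] at this
      simp at this
  · -- both length 2
    have hPP : TP {0,x,y} * TP {0,u,v} = TP {0,x',y'} * TP {0,u',v'} := by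
      have e1 : TP {0,x,y} * TP {0,u,v} = P := by rw [← hpl, hl]; simp [List.prod_cons]
      have e2 : TP {0,x',y'} * TP {0,u',v'} = P := by rw [← hpl', hl']; simp [List.prod_cons]
      rw [e1, e2]
    rcases core_poly x y u v x' y' u' v' hxy huv hxy' huv' hPP with
      ⟨e1, e2, e3, e4⟩ | ⟨e1, e2, e3, e4⟩
    · rw [hl, hl', e1, e2, e3, e4]
    · rw [hl, hl', e1, e2, ← e3, ← e4]
      exact List.Perm.swap _ _ _
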